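/- Let |ψ_i⟩ = (|0⟩ + e^{iφ_i}|1⟩)/√2, i = 1,2, be pure equatorial qubit states and let U_max = ((R_z(π/2)) ⊗ 1₂) U_c(3π/4, π/4, π/4) with U_c(α,β,γ) = C₂₁ (1₂ ⊗ R_y(β)) C₁₂ (R_z(γ) ⊗ R_y(α)) C₂₁. Then the concurrence of the final two-qubit pure state U_max(|ψ₁⟩⊗|ψ₂⟩) equals C = (1 + sin(Δφ))/2 with Δφ = φ₂ − φ₁. -/

import Mathlib

open Matrix Complex Real Kronecker
open scoped ComplexOrder

noncomputable section
/-- Pauli matrices -/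
def pauliX : Matrix (Fin 2) (Fin 2) ℂ := !![0, 1; 1, 0]
def pauliY : Matrix (Fin 2) (Fin 2) ℂ := !![0, -Complex.I; Complex.I, 0]
def pauliZ : Matrix (Fin 2) (Fin 2) ℂ := !![1, 0; 0, -1]

/-- partial trace over the second qubit -/
def ptrace2 (ρ : Matrix (Fin 2 × Fin 2) (Fin 2 × Fin 2) ℂ) : Matrix (Fin 2) (Fin 2) ℂ :=
  fun i j => ∑ k : Fin 2, ρ (i, k) (j, k)

/-- partial trace over the first qubit -/
def ptrace1 (ρ : Matrix (Fin 2 × Fin 2) (Fin 2 × Fin 2) ℂ) : Matrix (Fin 2) (Fin 2) ℂ :=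
  fun i j => ∑ k : Fin 2, ρ (k, i) (k, j)

/-- Bloch vector of a single-qubit state -/
def bloch (τ : Matrix (Fin 2) (Fin 2) ℂ) : Fin 3 → ℝ :=
  ![(Matrix.trace (pauliX * τ)).re, (Matrix.trace (pauliY * τ)).re,
    (Matrix.trace (pauliZ * τ)).re]

/-- projection of the Bloch vector into the xy-plane -/
def mvec (τ : Matrix (Fin 2) (Fin 2) ℂ) : Fin 2 → ℝ :=
  ![(Matrix.trace (pauliX * τ)).re, (Matrix.trace (pauliY * τ)).re]

def mdot (a b : Fin 2 → ℝ) : ℝ := a 0 * b 0 + a 1 * b 1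
def mnorm (a : Fin 2 → ℝ) : ℝ := Real.sqrt (a 0 ^ 2 + a 1 ^ 2)

/-- quantum-phase fidelity between two single-qubit states -/
def phaseFid (τ₁ τ₂ : Matrix (Fin 2) (Fin 2) ℂ) : ℝ :=
  mdot (mvec τ₁) (mvec τ₂) / (mnorm (mvec τ₁) * mnorm (mvec τ₂))

/-- phase synchronization fidelity of a two-qubit state ρ under a unitary U -/
def PSF (ρ U : Matrix (Fin 2 × Fin 2) (Fin 2 × Fin 2) ℂ) : ℝ :=
  phaseFid (ptrace2 (U * ρ * Uᴴ)) (ptrace1 (U * ρ * Uᴴ))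

/-- pure qubit state |ψ(θ,φ)⟩ = cos(θ/2)|0⟩ + e^{iφ} sin(θ/2)|1⟩ -/
def ψ (θ φ : ℝ) : Fin 2 → ℂ :=
  ![(Real.cos (θ / 2) : ℂ), Complex.exp (Complex.I * φ) * (Real.sin (θ / 2) : ℂ)]

/-- density matrix |v⟩⟨v| of a vector -/
def dm (v : Fin 2 → ℂ) : Matrix (Fin 2) (Fin 2) ℂ := Matrix.vecMulVec v (star v)

/-- CNOT with qubit 1 as control and qubit 2 as target -/
def CNOT12 : Matrix (Fin 2 × Fin 2) (Fin 2 × Fin 2) ℂ :=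
  fun i j => if i.1 = j.1 ∧ i.2 = j.2 + j.1 then 1 else 0

/-- CNOT with qubit 2 as control and qubit 1 as target -/
def CNOT21 : Matrix (Fin 2 × Fin 2) (Fin 2 × Fin 2) ℂ :=
  fun i j => if i.1 = j.1 + j.2 ∧ i.2 = j.2 then 1 else 0

/-- R_y(β) = exp(−i(β/2)σ_y) -/
def Ry (β : ℝ) : Matrix (Fin 2) (Fin 2) ℂ :=
  !![(Real.cos (β / 2) : ℂ), -(Real.sin (β / 2) : ℂ);
     (Real.sin (β / 2) : ℂ), (Real.cos (β / 2) : ℂ)]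

/-- R_z(γ) = exp(−i(γ/2)σ_z) -/
def Rz (γ : ℝ) : Matrix (Fin 2) (Fin 2) ℂ :=
  !![Complex.exp (-(Complex.I * γ / 2)), 0; 0, Complex.exp (Complex.I * γ / 2)]

/-- rotation operator R_n̂(α) = exp(−i(α/2) n̂·σ) (closed form, n̂ a unit axis) -/
def Raxis (n : Fin 3 → ℝ) (α : ℝ) : Matrix (Fin 2) (Fin 2) ℂ :=
  (Real.cos (α / 2) : ℂ) • (1 : Matrix (Fin 2) (Fin 2) ℂ) -
    (Complex.I * (Real.sin (α / 2) : ℂ)) •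
      ((n 0 : ℂ) • pauliX + (n 1 : ℂ) • pauliY + (n 2 : ℂ) • pauliZ)

/-- the SO(3) rotation by angle α about the unit axis n̂ (Rodrigues formula) -/
def rot3 (n : Fin 3 → ℝ) (α : ℝ) (v : Fin 3 → ℝ) : Fin 3 → ℝ :=
  Real.cos α • v + Real.sin α • (crossProduct n v) +
    ((1 - Real.cos α) * (n ⬝ᵥ v)) • n

/-- the entangling circuit U_c(α,β,γ) -/
def Uc (α β γ : ℝ) : Matrix (Fin 2 × Fin 2) (Fin 2 × Fin 2) ℂ :=
  CNOT21 * ((1 : Matrix (Fin 2) (Fin 2) ℂ) ⊗ₖ Ry β) * CNOT12 * (Rz γ ⊗ₖ Ry α) * CNOT21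

/-- the general two-qubit circuit U_g -/
def Ug (α β γ μ₁ μ₂ ν₁ ν₂ σ₁ : ℝ) : Matrix (Fin 2 × Fin 2) (Fin 2 × Fin 2) ℂ :=
  ((Rz σ₁ * Ry ν₁ * Rz μ₁) ⊗ₖ (Ry ν₂ * Rz μ₂)) * Uc α β γ


def vec4 (x y z t : ℂ) : Fin 2 × Fin 2 → ℂ := fun p => !![x, y; z, t] p.1 p.2

@[simp] lemma vec4_00 (x y z t : ℂ) : vec4 x y z t (0, 0) = x := rfl
@[simp] lemma vec4_01 (x y z t : ℂ) : vec4 x y z t (0, 1) = y := rfl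
@[simp] lemma vec4_10 (x y z t : ℂ) : vec4 x y z t (1, 0) = z := rfl
@[simp] lemma vec4_11 (x y z t : ℂ) : vec4 x y z t (1, 1) = t := rfl

lemma cnot21_vec (x y z t : ℂ) : CNOT21.mulVec (vec4 x y z t) = vec4 x t z y := by
  funext p
  obtain ⟨i, j⟩ := p
  fin_cases i <;> fin_cases j <;>
    simp [vec4, CNOT21, Matrix.mulVec, dotProduct, Fintype.sum_prod_type, Fin.sum_univ_two] <;>
    decide

lemma cnot12_vec (x y z t : ℂ) : CNOT12.mulVec (vec4 x y z t) = vec4 x y t z := by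
  funext p
  obtain ⟨i, j⟩ := p
  fin_cases i <;> fin_cases j <;>
    simp [vec4, CNOT12, Matrix.mulVec, dotProduct, Fintype.sum_prod_type, Fin.sum_univ_two] <;>
    decide

lemma ry2_vec (β : ℝ) (x y z t : ℂ) :
    ((1 : Matrix (Fin 2) (Fin 2) ℂ) ⊗ₖ Ry β).mulVec (vec4 x y z t) =
      vec4 ((Real.cos (β/2) : ℂ) * x - (Real.sin (β/2) : ℂ) * y)
           ((Real.sin (β/2) : ℂ) * x + (Real.cos (β/2) : ℂ) * y)
           ((Real.cos (β/2) : ℂ) * z - (Real.sin (β/2) : ℂ) * t)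
           ((Real.sin (β/2) : ℂ) * z + (Real.cos (β/2) : ℂ) * t) := by
  funext p
  obtain ⟨i, j⟩ := p
  fin_cases i <;> fin_cases j <;>
    simp [vec4, Ry, Matrix.mulVec, dotProduct, Fintype.sum_prod_type, Fin.sum_univ_two,
      Matrix.one_apply] <;> ring

lemma rzry_vec (γ α : ℝ) (x y z t : ℂ) :
    (Rz γ ⊗ₖ Ry α).mulVec (vec4 x y z t) =
      vec4 (Complex.exp (-(Complex.I * γ / 2)) * ((Real.cos (α/2) : ℂ) * x - (Real.sin (α/2) : ℂ) * y))
           (Complex.exp (-(Complex.I * γ / 2)) * ((Real.sin (α/2) : ℂ) * x + (Real.cos (α/2) : ℂ) * y))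
           (Complex.exp (Complex.I * γ / 2) * ((Real.cos (α/2) : ℂ) * z - (Real.sin (α/2) : ℂ) * t))
           (Complex.exp (Complex.I * γ / 2) * ((Real.sin (α/2) : ℂ) * z + (Real.cos (α/2) : ℂ) * t)) := by
  funext p
  obtain ⟨i, j⟩ := p
  fin_cases i <;> fin_cases j <;>
    simp [vec4, Rz, Ry, Matrix.mulVec, dotProduct, Fintype.sum_prod_type, Fin.sum_univ_two] <;> ring

lemma rz1_vec (γ : ℝ) (x y z t : ℂ) :
    (Rz γ ⊗ₖ (1 : Matrix (Fin 2) (Fin 2) ℂ)).mulVec (vec4 x y z t) =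
      vec4 (Complex.exp (-(Complex.I * γ / 2)) * x) (Complex.exp (-(Complex.I * γ / 2)) * y)
           (Complex.exp (Complex.I * γ / 2) * z) (Complex.exp (Complex.I * γ / 2) * t) := by
  funext p
  obtain ⟨i, j⟩ := p
  fin_cases i <;> fin_cases j <;>
    simp [vec4, Rz, Matrix.mulVec, dotProduct, Fintype.sum_prod_type, Fin.sum_univ_two,
      Matrix.one_apply] <;> ring

theorem umax_concurrence (φ₁ φ₂ : ℝ) :
    ∀ w : Fin 2 × Fin 2 → ℂ,
    w = ((Rz (π / 2) ⊗ₖ (1 : Matrix (Fin 2) (Fin 2) ℂ)) *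
          Uc (3 * π / 4) (π / 4) (π / 4)).mulVec
        (fun i => ψ (π / 2) φ₁ i.1 * ψ (π / 2) φ₂ i.2) →
    ‖2 * (w (0, 0) * w (1, 1) - w (0, 1) * w (1, 0))‖ =
      (1 + Real.sin (φ₂ - φ₁)) / 2 := by
  intro w hw
  subst hw
  set a : ℂ := Complex.exp (Complex.I * (π / 4 : ℝ) / 2) with ha
  set e1 : ℂ := Complex.exp (Complex.I * (φ₁ : ℝ)) with he1
  set e2 : ℂ := Complex.exp (Complex.I * (φ₂ : ℝ)) with he2
  -- powers of a as exponentials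
  have hpow : ∀ (n : ℕ) (x : ℝ), (n : ℝ) * (π / 8) = x →
      a ^ n = Complex.exp ((x : ℝ) * Complex.I) := by
    intro n x hx
    rw [ha, ← Complex.exp_nat_mul]
    congr 1
    rw [← hx]
    push_cast
    ring
  have h8 : a ^ 8 = -1 := by
    rw [hpow 8 π (by ring), Complex.exp_pi_mul_I]
  have hI : a ^ 4 = Complex.I := by
    rw [hpow 4 (π / 2) (by ring), Complex.exp_mul_I, ← Complex.ofReal_cos,
      ← Complex.ofReal_sin, Real.cos_pi_div_two, Real.sin_pi_div_two]
    simp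
  -- Euler-form facts
  have euler : ∀ (n : ℕ) (x : ℝ), (n : ℝ) * (π / 8) = x →
      a ^ n = ((Real.cos x : ℝ) : ℂ) + ((Real.sin x : ℝ) : ℂ) * Complex.I := by
    intro n x hx
    rw [hpow n x hx, Complex.exp_mul_I, ← Complex.ofReal_cos, ← Complex.ofReal_sin]
  have eulerneg : ∀ (n : ℕ) (x : ℝ), (n : ℝ) * (π / 8) = π - x →
      a ^ n = -((Real.cos x : ℝ) : ℂ) + ((Real.sin x : ℝ) : ℂ) * Complex.I := by
    intro n x hx
    rw [hpow n (π - x) hx, Complex.exp_mul_I, ← Complex.ofReal_cos, ← Complex.ofReal_sin,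
      Real.cos_pi_sub, Real.sin_pi_sub, Complex.ofReal_neg]
  have h1 := euler 1 (π/4/2) (by ring)
  have h7 := eulerneg 7 (π/4/2) (by ring)
  have h3 := euler 3 (3*π/4/2) (by ring)
  have h5 := eulerneg 5 (3*π/4/2) (by ring)
  have h2 := euler 2 (π/2/2) (by ring)
  have h6 := eulerneg 6 (π/2/2) (by ring)
  -- constants as polynomials in a
  have hc8 : ((Real.cos (π/4/2) : ℝ) : ℂ) = (a - a^7)/2 := by
    linear_combination (-1/2 : ℂ) * h1 + (1/2 : ℂ) * h7
  have hs8 : ((Real.sin (π/4/2) : ℝ) : ℂ) = (a^3 - a^5)/2 := by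
    linear_combination (Complex.I/2) * h1 + (Complex.I/2) * h7 + ((a + a^7)/2) * hI
      + (-(a^3)/2) * h8 + ((Real.sin (π/4/2) : ℝ) : ℂ) * Complex.I_sq
  have hc38 : ((Real.cos (3*π/4/2) : ℝ) : ℂ) = (a^3 - a^5)/2 := by
    linear_combination (-1/2 : ℂ) * h3 + (1/2 : ℂ) * h5
  have hs38 : ((Real.sin (3*π/4/2) : ℝ) : ℂ) = (a - a^7)/2 := by
    linear_combination (Complex.I/2) * h3 + (Complex.I/2) * h5 + ((a^3 + a^5)/2) * hI
      + (-(a)/2) * h8 + ((Real.sin (3*π/4/2) : ℝ) : ℂ) * Complex.I_sq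
  have hc4 : ((Real.cos (π/2/2) : ℝ) : ℂ) = (a^2 - a^6)/2 := by
    linear_combination (-1/2 : ℂ) * h2 + (1/2 : ℂ) * h6
  have hs4 : ((Real.sin (π/2/2) : ℝ) : ℂ) = (a^2 - a^6)/2 := by
    linear_combination (Complex.I/2) * h2 + (Complex.I/2) * h6 + ((a^2 + a^6)/2) * hI
      + (-(a^2)/2) * h8 + ((Real.sin (π/2/2) : ℝ) : ℂ) * Complex.I_sq
  -- Rz phases
  have hx2 : Complex.exp (Complex.I * ((π/2 : ℝ) : ℂ) / 2) = a ^ 2 := by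
    rw [ha, ← Complex.exp_nat_mul]
    congr 1
    push_cast
    ring
  have hainv : Complex.exp (-(Complex.I * ((π/4 : ℝ) : ℂ) / 2)) * a = 1 := by
    rw [ha, ← Complex.exp_add]
    simp
  have hbinv : Complex.exp (-(Complex.I * ((π/2 : ℝ) : ℂ) / 2)) * a ^ 2 = 1 := by
    rw [← hx2, ← Complex.exp_add]
    simp
  have hra : Complex.exp (-(Complex.I * ((π/4 : ℝ) : ℂ) / 2)) = -a^7 := by
    linear_combination (-(a^7)) * hainv + Complex.exp (-(Complex.I * ((π/4 : ℝ) : ℂ) / 2)) * h8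
  have hrb : Complex.exp (-(Complex.I * ((π/2 : ℝ) : ℂ) / 2)) = -a^6 := by
    linear_combination (-(a^6)) * hbinv + Complex.exp (-(Complex.I * ((π/2 : ℝ) : ℂ) / 2)) * h8
  -- relating e1, e2 and the phase difference
  have hA : (((Real.cos (φ₂ - φ₁) : ℝ) : ℂ) + ((Real.sin (φ₂ - φ₁) : ℝ) : ℂ) * Complex.I) * e1
      = e2 := by
    have h : (((Real.cos (φ₂ - φ₁) : ℝ) : ℂ) + ((Real.sin (φ₂ - φ₁) : ℝ) : ℂ) * Complex.I)
        = Complex.exp (((φ₂ - φ₁ : ℝ) : ℂ) * Complex.I) := by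
      rw [Complex.exp_mul_I, ← Complex.ofReal_cos, ← Complex.ofReal_sin]
    rw [h, he1, he2, ← Complex.exp_add]
    congr 1
    push_cast
    ring
  have hB : (((Real.cos (φ₂ - φ₁) : ℝ) : ℂ) - ((Real.sin (φ₂ - φ₁) : ℝ) : ℂ) * Complex.I) * e2
      = e1 := by
    have h : (((Real.cos (φ₂ - φ₁) : ℝ) : ℂ) - ((Real.sin (φ₂ - φ₁) : ℝ) : ℂ) * Complex.I)
        = Complex.exp (((φ₁ - φ₂ : ℝ) : ℂ) * Complex.I) := by
      rw [Complex.exp_mul_I, ← Complex.ofReal_cos, ← Complex.ofReal_sin,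
        show φ₁ - φ₂ = -(φ₂ - φ₁) by ring, Real.cos_neg, Real.sin_neg, Complex.ofReal_neg]
      ring
    rw [h, he1, he2, ← Complex.exp_add]
    congr 1
    push_cast
    ring
  -- reduce |z| to the algebraic identity
  have habs : ∀ z : ℂ,
      z = a ^ 2 * Complex.I * e1 * e2 * (((1 + Real.sin (φ₂ - φ₁) : ℝ)) : ℂ) / 2 →
      ‖z‖ = (1 + Real.sin (φ₂ - φ₁)) / 2 := by
    intro z hz
    have haa : ‖a‖ = 1 := by
      rw [ha, show Complex.I * ((π/4 : ℝ) : ℂ) / 2 = ((π/8 : ℝ) : ℂ) * Complex.I by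
        push_cast; ring, Complex.norm_exp_ofReal_mul_I]
    have he1a : ‖e1‖ = 1 := by
      rw [he1, show Complex.I * ((φ₁ : ℝ) : ℂ) = ((φ₁ : ℝ) : ℂ) * Complex.I by ring,
        Complex.norm_exp_ofReal_mul_I]
    have he2a : ‖e2‖ = 1 := by
      rw [he2, show Complex.I * ((φ₂ : ℝ) : ℂ) = ((φ₂ : ℝ) : ℂ) * Complex.I by ring,
        Complex.norm_exp_ofReal_mul_I]
    have hnn : (0 : ℝ) ≤ 1 + Real.sin (φ₂ - φ₁) := by
      nlinarith [Real.neg_one_le_sin (φ₂ - φ₁)]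
    rw [hz, norm_div, norm_mul, norm_mul, norm_mul, norm_mul, norm_pow, haa, he1a, he2a,
      Complex.norm_I, Complex.norm_real, Real.norm_eq_abs, _root_.abs_of_nonneg hnn]
    norm_num [Complex.norm_two]
  apply habs
  -- now compute the state through the circuit
  have hv0 : (fun i : Fin 2 × Fin 2 => ψ (π / 2) φ₁ i.1 * ψ (π / 2) φ₂ i.2) =
      vec4 ((Real.cos (π/2/2) : ℂ) * (Real.cos (π/2/2) : ℂ))
           ((Real.cos (π/2/2) : ℂ) * (e2 * (Real.sin (π/2/2) : ℂ)))
           ((e1 * (Real.sin (π/2/2) : ℂ)) * (Real.cos (π/2/2) : ℂ))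
           ((e1 * (Real.sin (π/2/2) : ℂ)) * (e2 * (Real.sin (π/2/2) : ℂ))) := by
    funext p
    obtain ⟨i, j⟩ := p
    fin_cases i <;> fin_cases j <;> simp [vec4, ψ, he1, he2]
  rw [Uc]
  simp only [← Matrix.mulVec_mulVec]
  rw [hv0, cnot21_vec, rzry_vec, cnot12_vec, ry2_vec, cnot21_vec, rz1_vec,
    vec4_00, vec4_01, vec4_10, vec4_11]
  rw [hc8, hs8, hc38, hs38, hc4, hs4, hra, hrb, hx2]
  rw [← ha]
  have hS : Complex.sin ((φ₂ : ℂ) - (φ₁ : ℂ)) = ((Real.sin (φ₂ - φ₁) : ℝ) : ℂ) := by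
    rw [← Complex.ofReal_sub, Complex.ofReal_sin]
  push_cast
  linear_combination (((-1/4 : ℂ) * a ^ 2 * e2 ^ 2 + (1/4 : ℂ) * a ^ 2 * e1 ^ 2 + (-1/2 : ℂ) * a ^ 6 * e1 * e2 + (1/4 : ℂ) * a ^ 10 * e2 ^ 2 + (-1/4 : ℂ) * a ^ 10 * e1 ^ 2 + (1/2 : ℂ) * a ^ 14 * e1 * e2 + (-1/4 : ℂ) * a ^ 18 * e2 ^ 2 + (1/4 : ℂ) * a ^ 18 * e1 ^ 2 + (-65/128 : ℂ) * a ^ 22 * e1 * e2 + (-1/64 : ℂ) * a ^ 24 * e2 ^ 2 + (1/64 : ℂ) * a ^ 24 * e1 ^ 2 + (17/64 : ℂ) * a ^ 26 * e2 ^ 2 + (5/64 : ℂ) * a ^ 26 * e1 * e2 + (-17/64 : ℂ) * a ^ 26 * e1 ^ 2 + (5/64 : ℂ) * a ^ 28 * e2 ^ 2 + (-1/16 : ℂ) * a ^ 28 * e1 * e2 + (-5/64 : ℂ) * a ^ 28 * e1 ^ 2 + (-1/16 : ℂ) * a ^ 30 * e2 ^ 2 + (5/16 : ℂ) * a ^ 30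 * e1 * e2 + (1/16 : ℂ) * a ^ 30 * e1 ^ 2 + (-9/64 : ℂ) * a ^ 32 * e2 ^ 2 + (3/16 : ℂ) * a ^ 32 * e1 * e2 + (9/64 : ℂ) * a ^ 32 * e1 ^ 2 + (-13/64 : ℂ) * a ^ 34 * e2 ^ 2 + (23/128 : ℂ) * a ^ 34 * e1 * e2 + (13/64 : ℂ) * a ^ 34 * e1 ^ 2 + (5/64 : ℂ) * a ^ 36 * e2 ^ 2 + (-1/8 : ℂ) * a ^ 36 * e1 * e2 + (-5/64 : ℂ) * a ^ 36 * e1 ^ 2 + (1/8 : ℂ) * a ^ 38 * e2 ^ 2 + (-5/8 : ℂ) * a ^ 38 * e1 * e2 + (-1/8 : ℂ) * a ^ 38 * e1 ^ 2 + (5/64 : ℂ) * a ^ 40 * e2 ^ 2 + (-3/16 : ℂ) * a ^ 40 * e1 * e2 + (-5/64 : ℂ) * a ^ 40 * e1 ^ 2 + (3/64 : ℂ) * a ^ 42 * e2 ^ 2 + (11/64 : ℂ) * a ^ 42 * e1 * e2 + (-3/64 : ℂ) * a ^ 42 * e1 ^ 2 + (-9/64 : ℂ) * a ^ 44 * e2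 ^ 2 + (3/8 : ℂ) * a ^ 44 * e1 * e2 + (9/64 : ℂ) * a ^ 44 * e1 ^ 2 + (-1/16 : ℂ) * a ^ 46 * e2 ^ 2 + (29/64 : ℂ) * a ^ 46 * e1 * e2 + (1/16 : ℂ) * a ^ 46 * e1 ^ 2 + (5/64 : ℂ) * a ^ 48 * e2 ^ 2 + (-3/16 : ℂ) * a ^ 48 * e1 * e2 + (-5/64 : ℂ) * a ^ 48 * e1 ^ 2 + (1/64 : ℂ) * a ^ 50 * e2 ^ 2 + (-7/16 : ℂ) * a ^ 50 * e1 * e2 + (-1/64 : ℂ) * a ^ 50 * e1 ^ 2 + (-1/64 : ℂ) * a ^ 52 * e2 ^ 2 + (-1/8 : ℂ) * a ^ 52 * e1 * e2 + (1/64 : ℂ) * a ^ 52 * e1 ^ 2 + (17/128 : ℂ) * a ^ 54 * e1 * e2 + (3/16 : ℂ) * a ^ 56 * e1 * e2 + (-1/16 : ℂ) * a ^ 60 * e1 * e2 + (-1/64 : ℂ) * a ^ 62 * e1 * e2 + (1/128 : ℂ) * a ^ 66 * e1 * e2)) * h8 + (-(a^2*e2)/4) * hA + (a^2*e1/4) *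 hB + (a^2*e1*e2/2) * hI + (-(a^2*e1*e2*Complex.I)/2) * hS
end
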